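/- Let d ≥ 1, let I ⊆ ℝ be an open interval, and let ρ : ℝ^d × ℝ → ℝ and u : ℝ^d × ℝ → ℝ^d be continuously differentiable (C¹ jointly in space and time). Suppose there is a compact set K ⊆ ℝ^d such that ρ(x,t) = 0 for every x ∉ K and t ∈ I, and suppose the balance of mass ρ̇(x,t) + ρ(x,t)·div u(x,t) = 0 holds for every x ∈ ℝ^d and t ∈ I. Define the kinetic energy density κ(x,t) = (1/2)·ρ(x,t)·‖u(x,t)‖² and the material acceleration u̇(x,t) = ∂ₜu(x,t) + Dₓu(x,t)·u(x,t). Then for every t₀ ∈ I the function t ↦ ∫_{ℝ^d} κ(x,t) dx has derivative at t₀ equal to ∫_{ℝ^d} ρ(x,t₀)·⟨u̇(x,t₀), u(x,t₀)⟩ dx. -/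

import Mathlib

open MeasureTheory Matrix

/-- Spatial divergence of a vector field on `ℝ^d`: the trace of its Jacobian. -/
noncomputable def sdiv {d : ℕ} (f : (Fin d → ℝ) → (Fin d → ℝ)) (x : Fin d → ℝ) : ℝ :=
  ∑ i, fderiv ℝ f x (Pi.single i 1) i

/-- Material time derivative of a scalar field: `∂ₜf + ⟨∇ₓf, u⟩`. -/
noncomputable def matDeriv {d : ℕ} (f : (Fin d → ℝ) × ℝ → ℝ)
    (u : (Fin d → ℝ) × ℝ → (Fin d → ℝ)) (x : Fin d → ℝ) (t : ℝ) : ℝ :=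
  deriv (fun τ => f (x, τ)) t + fderiv ℝ (fun y => f (y, t)) x (u (x, t))

/-- Material acceleration `u̇ = ∂ₜu + (Dₓu)u` of a velocity field. -/
noncomputable def matAccel {d : ℕ} (u : (Fin d → ℝ) × ℝ → Fin d → ℝ)
    (x : Fin d → ℝ) (t : ℝ) : Fin d → ℝ :=
  deriv (fun τ => u (x, τ)) t + fderiv ℝ (fun y => u (y, t)) x (u (x, t))

/-- Kinetic-energy transport identity on `ℝ^d` with compactly supported mass density:
under the balance of mass, `d/dt ∫ κ dx = ∫ ρ ⟨u̇, u⟩ dx` with `κ = (1/2)ρ‖u‖²`. -/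

lemma div_int_zero {d : ℕ} (hd : 1 ≤ d) (g : (Fin d → ℝ) → Fin d → ℝ)
    (hg : ContDiff ℝ 1 g) (K : Set (Fin d → ℝ)) (hK : IsCompact K)
    (h0 : ∀ x ∉ K, g x = 0) :
    ∫ x, ∑ i, fderiv ℝ g x (Pi.single i 1) i = 0 := by
  obtain ⟨n, rfl⟩ : ∃ n, d = n + 1 := ⟨d - 1, (Nat.succ_pred_eq_of_pos hd).symm⟩
  obtain ⟨r', hKr'⟩ := hK.isBounded.subset_ball 0
  set r : ℝ := |r'| + 1 with hrdef
  have hrpos : 0 < r := by positivity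
  have hKr : K ⊆ Metric.ball 0 r := hKr'.trans (Metric.ball_subset_ball (by
    have := le_abs_self r'; linarith))
  have hg' : Differentiable ℝ g := hg.differentiable one_ne_zero
  have hKlt : ∀ x ∈ K, ∀ i, |x i| < r := by
    intro x hx i
    have h1 : ‖x i‖ ≤ ‖x‖ := norm_le_pi_norm x i
    have h2 : ‖x‖ < r := by simpa [Metric.mem_ball] using hKr hx
    exact lt_of_le_of_lt h1 h2
  set a : Fin (n + 1) → ℝ := fun _ => -r with ha
  set b : Fin (n + 1) → ℝ := fun _ => r with hb
  have hab : a ≤ b := fun i => by simp only [ha, hb]; linarith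
  have hKIcc : K ⊆ Set.Icc a b := by
    intro x hx
    constructor <;> intro i <;> have := (abs_lt.1 (hKlt x hx i)) <;> simp only [ha, hb] <;> linarith [this.1, this.2]
  have hfd0 : ∀ x ∉ K, fderiv ℝ g x = 0 := by
    intro x hx
    have hev : g =ᶠ[nhds x] (fun _ => (0 : Fin (n+1) → ℝ)) :=
      Filter.eventuallyEq_of_mem (hK.isClosed.isOpen_compl.mem_nhds hx) h0
    rw [hev.fderiv_eq, fderiv_fun_const]
    rfl
  have hdivcont : Continuous fun x => ∑ i, fderiv ℝ g x (Pi.single i 1) i := by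
    apply continuous_finset_sum
    intro i _
    exact ((continuous_apply i).comp
      ((hg.continuous_fderiv one_ne_zero).clm_apply continuous_const))
  have key := integral_divergence_of_hasFDerivAt_off_countable a b hab g
    (fun x => fderiv ℝ g x) ∅ Set.countable_empty hg.continuous.continuousOn
    (fun x _ => (hg' x).hasFDerivAt)
    (hdivcont.continuousOn.integrableOn_compact isCompact_Icc)
  have hfaces : ∀ i : Fin (n + 1),
      ((∫ x in Set.Icc (a ∘ i.succAbove) (b ∘ i.succAbove), g (i.insertNth (b i) x) i)
        - ∫ x in Set.Icc (a ∘ i.succAbove) (b ∘ i.succAbove), g (i.insertNth (a i) x) i) = 0 := by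
    intro i
    have hfront : ∀ y : Fin n → ℝ, g (i.insertNth (b i) y) = 0 := by
      intro y
      apply h0
      intro hmem
      have := hKlt _ hmem i
      rw [Fin.insertNth_apply_same] at this
      simp only [hb] at this
      exact absurd this (by simp [abs_of_nonneg (le_of_lt ((abs_nonneg _).trans_lt this))])
    have hback : ∀ y : Fin n → ℝ, g (i.insertNth (a i) y) = 0 := by
      intro y
      apply h0
      intro hmem
      have := hKlt _ hmem i
      rw [Fin.insertNth_apply_same] at this
      simp only [ha, abs_neg] at this
      exact absurd this (by simp [abs_of_nonneg (le_of_lt ((abs_nonneg _).trans_lt this))])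
    simp [hfront, hback]
  rw [Finset.sum_congr rfl (fun i _ => hfaces i), Finset.sum_const_zero] at key
  rw [← setIntegral_eq_integral_of_forall_compl_eq_zero (s := Set.Icc a b)]
  · exact key
  · intro x hx
    rw [hfd0 x (fun h => hx (hKIcc h))]
    simp

theorem stmt12 {d : ℕ} (hd : 1 ≤ d) (a b : ℝ) (I : Set ℝ) (hI : I = Set.Ioo a b)
    (ρ : (Fin d → ℝ) × ℝ → ℝ) (u : (Fin d → ℝ) × ℝ → (Fin d → ℝ))
    (hρ : ContDiff ℝ 1 ρ) (hu : ContDiff ℝ 1 u)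
    (K : Set (Fin d → ℝ)) (hK : IsCompact K)
    (hsupp : ∀ t ∈ I, ∀ x ∉ K, ρ (x, t) = 0)
    (hmass : ∀ (x : Fin d → ℝ), ∀ t ∈ I,
      matDeriv ρ u x t + ρ (x, t) * sdiv (fun y => u (y, t)) x = 0) :
    ∀ t₀ ∈ I,
      HasDerivAt (fun t => ∫ x, (1 / 2) * ρ (x, t) * (u (x, t) ⬝ᵥ u (x, t)))
        (∫ x, ρ (x, t₀) * (matAccel u x t₀ ⬝ᵥ u (x, t₀))) t₀ := by
  intro t₀ ht₀
  have hIopen : IsOpen I := hI ▸ isOpen_Ioo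
  set f : (Fin d → ℝ) × ℝ → ℝ := fun q => 1 / 2 * ρ q * (u q ⬝ᵥ u q) with hfdef
  have hρd : Differentiable ℝ ρ := hρ.differentiable one_ne_zero
  have hud : Differentiable ℝ u := hu.differentiable one_ne_zero
  have hui : ∀ i, ContDiff ℝ 1 fun q => u q i := fun i => contDiff_pi.mp hu i
  have hf : ContDiff ℝ 1 f := by
    have hdot : ContDiff ℝ 1 fun q => u q ⬝ᵥ u q := by
      simp only [dotProduct]
      exact ContDiff.sum fun i _ => (hui i).mul (hui i)
    exact (contDiff_const.mul hρ).mul hdot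
  have hfd : Differentiable ℝ f := hf.differentiable one_ne_zero
  -- the key formula for the derivative of f
  have key : ∀ (q w : (Fin d → ℝ) × ℝ), fderiv ℝ f q w
      = 1 / 2 * fderiv ℝ ρ q w * (u q ⬝ᵥ u q) + ρ q * (fderiv ℝ u q w ⬝ᵥ u q) := by
    intro q w
    have hB : HasFDerivAt u (fderiv ℝ u q) q := (hud q).hasFDerivAt
    have huiq : ∀ i : Fin d, HasFDerivAt (fun q => u q i)
        ((ContinuousLinearMap.proj i).comp (fderiv ℝ u q)) q :=
      fun i => by exact (ContinuousLinearMap.proj i).hasFDerivAt.comp q hB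
    have hS : HasFDerivAt (fun q => u q ⬝ᵥ u q)
        (∑ i : Fin d, (u q i • ((ContinuousLinearMap.proj i).comp (fderiv ℝ u q))
          + u q i • ((ContinuousLinearMap.proj i).comp (fderiv ℝ u q)))) q := by
      simp only [dotProduct]
      exact HasFDerivAt.fun_sum fun i _ => (huiq i).fun_mul (huiq i)
    have h2 : HasFDerivAt (fun q => 1 / 2 * ρ q) ((1 / 2 : ℝ) • fderiv ℝ ρ q) q :=
      (hρd q).hasFDerivAt.const_mul _
    have hfq := h2.fun_mul hS
    rw [hfq.fderiv]
    simp only [ContinuousLinearMap.add_apply, ContinuousLinearMap.smul_apply,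
      ContinuousLinearMap.coe_sum', Finset.sum_apply, ContinuousLinearMap.comp_apply,
      ContinuousLinearMap.proj_apply, smul_eq_mul, dotProduct]
    have e : ∑ i : Fin d, (u q i * (fderiv ℝ u q) w i + u q i * (fderiv ℝ u q) w i)
        = 2 * ∑ i, (fderiv ℝ u q) w i * u q i := by
      rw [Finset.mul_sum]; exact Finset.sum_congr rfl fun i _ => by ring
    rw [e]
    ring
  -- time and space directional derivatives
  have hcurve : ∀ (x : Fin d → ℝ) (t : ℝ),
      HasDerivAt (fun τ => ((x, τ) : (Fin d → ℝ) × ℝ)) (0, 1) t :=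
    fun x t => (hasDerivAt_const t x).prodMk (hasDerivAt_id t)
  have hemb : ∀ (t : ℝ) (x : Fin d → ℝ),
      HasFDerivAt (fun y => ((y, t) : (Fin d → ℝ) × ℝ))
        ((ContinuousLinearMap.id ℝ (Fin d → ℝ)).prod 0) x :=
    fun t x => (hasFDerivAt_id x).prodMk (hasFDerivAt_const t x)
  have hρt : ∀ (x : Fin d → ℝ) (t : ℝ),
      HasDerivAt (fun τ => ρ (x, τ)) (fderiv ℝ ρ (x, t) (0, 1)) t :=
    fun x t => (hρd (x, t)).hasFDerivAt.comp_hasDerivAt t (hcurve x t)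
  have hut : ∀ (x : Fin d → ℝ) (t : ℝ),
      HasDerivAt (fun τ => u (x, τ)) (fderiv ℝ u (x, t) (0, 1)) t :=
    fun x t => (hud (x, t)).hasFDerivAt.comp_hasDerivAt t (hcurve x t)
  have hft : ∀ (x : Fin d → ℝ) (t : ℝ),
      HasDerivAt (fun τ => f (x, τ)) (fderiv ℝ f (x, t) (0, 1)) t :=
    fun x t => (hfd (x, t)).hasFDerivAt.comp_hasDerivAt t (hcurve x t)
  have hρs : ∀ (x : Fin d → ℝ) (t : ℝ) (v : Fin d → ℝ),
      fderiv ℝ (fun y => ρ (y, t)) x v = fderiv ℝ ρ (x, t) (v, 0) := by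
    intro x t v
    have h1 : HasFDerivAt (fun y => ρ (y, t))
        ((fderiv ℝ ρ (x, t)).comp ((ContinuousLinearMap.id ℝ (Fin d → ℝ)).prod 0)) x := by
      exact (hρd (x, t)).hasFDerivAt.comp x (hemb t x)
    rw [h1.fderiv]
    simp
  have hus : ∀ (x : Fin d → ℝ) (t : ℝ) (v : Fin d → ℝ),
      fderiv ℝ (fun y => u (y, t)) x v = fderiv ℝ u (x, t) (v, 0) := by
    intro x t v
    have h1 : HasFDerivAt (fun y => u (y, t))
        ((fderiv ℝ u (x, t)).comp ((ContinuousLinearMap.id ℝ (Fin d → ℝ)).prod 0)) x := by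
      exact (hud (x, t)).hasFDerivAt.comp x (hemb t x)
    rw [h1.fderiv]
    simp
  have hfs : ∀ (x : Fin d → ℝ) (t : ℝ) (v : Fin d → ℝ),
      fderiv ℝ (fun y => f (y, t)) x v = fderiv ℝ f (x, t) (v, 0) := by
    intro x t v
    have h1 : HasFDerivAt (fun y => f (y, t))
        ((fderiv ℝ f (x, t)).comp ((ContinuousLinearMap.id ℝ (Fin d → ℝ)).prod 0)) x := by
      exact (hfd (x, t)).hasFDerivAt.comp x (hemb t x)
    rw [h1.fderiv]
    simp
  -- setup for differentiation under the integral
  obtain ⟨ε, hε, hball⟩ : ∃ ε > 0, Metric.closedBall t₀ ε ⊆ I := by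
    rcases Metric.nhds_basis_closedBall.mem_iff.mp (hIopen.mem_nhds ht₀) with ⟨ε, hε, h⟩
    exact ⟨ε, hε, h⟩
  have hF'cont : Continuous fun p : (Fin d → ℝ) × ℝ => fderiv ℝ f p (0, 1) :=
    (hf.continuous_fderiv one_ne_zero).clm_apply continuous_const
  obtain ⟨C, hC⟩ := (hK.prod (isCompact_closedBall t₀ ε)).exists_bound_of_continuousOn
    hF'cont.continuousOn
  have hfzero : ∀ (x : Fin d → ℝ), x ∉ K → ∀ t ∈ I, fderiv ℝ f (x, t) = 0 := by
    intro x hx t ht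
    have hev : f =ᶠ[nhds (x, t)] (fun _ => (0 : ℝ)) := by
      apply Filter.eventuallyEq_of_mem
        (((hK.isClosed.isOpen_compl).prod hIopen).mem_nhds (Set.mem_prod.mpr ⟨Set.mem_compl hx, ht⟩))
      rintro ⟨y, s⟩ ⟨hy, hs⟩
      simp only [hfdef, hsupp s hs y hy, mul_zero, zero_mul]
    rw [hev.fderiv_eq]
    exact fderiv_const_apply 0
  have h_bound : ∀ (x : Fin d → ℝ), ∀ t ∈ Metric.ball t₀ ε,
      ‖fderiv ℝ f (x, t) (0, 1)‖ ≤ K.indicator (fun _ => C) x := by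
    intro x t ht
    by_cases hx : x ∈ K
    · rw [Set.indicator_of_mem hx]
      exact hC (x, t) ⟨hx, Metric.ball_subset_closedBall ht⟩
    · rw [Set.indicator_of_notMem hx,
        hfzero x hx t (hball (Metric.ball_subset_closedBall ht))]
      simp
  have bound_int : Integrable (K.indicator fun _ => C) := by
    rw [integrable_indicator_iff hK.measurableSet]
    exact (integrableOn_const_iff).2 (Or.inr hK.measure_lt_top)
  have hF_meas : ∀ᶠ t in nhds t₀, AEStronglyMeasurable (fun x => f (x, t)) volume :=
    Filter.Eventually.of_forall fun t =>
      (hf.continuous.comp (continuous_id.prodMk continuous_const)).aestronglyMeasurable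
  have hF_int : Integrable (fun x => f (x, t₀)) volume := by
    apply Continuous.integrable_of_hasCompactSupport
      (hf.continuous.comp (continuous_id.prodMk continuous_const))
    apply HasCompactSupport.intro hK
    intro x hx
    show 1 / 2 * ρ (x, t₀) * (u (x, t₀) ⬝ᵥ u (x, t₀)) = 0
    rw [hsupp t₀ ht₀ x hx]
    ring
  have hF'meas : AEStronglyMeasurable (fun x => fderiv ℝ f (x, t₀) (0, 1)) volume :=
    (hF'cont.comp (continuous_id.prodMk continuous_const)).aestronglyMeasurable
  obtain ⟨hF'int, hder⟩ := hasDerivAt_integral_of_dominated_loc_of_deriv_le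
    (F := fun t x => f (x, t)) (F' := fun t x => fderiv ℝ f (x, t) (0, 1))
    (bound := K.indicator fun _ => C) (Metric.ball_mem_nhds t₀ hε) hF_meas hF_int hF'meas
    (Filter.Eventually.of_forall fun x t ht => h_bound x t ht) bound_int
    (Filter.Eventually.of_forall fun x t _ => hft x t)
  -- the vector field for the divergence theorem
  set g : (Fin d → ℝ) → Fin d → ℝ := fun y i => f (y, t₀) * u (y, t₀) i with hgdef
  have hembC : ContDiff ℝ 1 fun y : Fin d → ℝ => ((y, t₀) : (Fin d → ℝ) × ℝ) :=
    contDiff_id.prodMk contDiff_const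
  have hgC : ContDiff ℝ 1 g :=
    contDiff_pi.2 fun i => (hf.comp hembC).mul ((hui i).comp hembC)
  have hg0 : ∀ x ∉ K, g x = 0 := by
    intro x hx
    funext i
    simp only [hgdef, hfdef, hsupp t₀ ht₀ x hx, mul_zero, zero_mul, Pi.zero_apply]
  have hdiv0 : ∫ x, ∑ i, fderiv ℝ g x (Pi.single i 1) i = 0 :=
    div_int_zero hd g hgC K hK hg0
  -- pointwise identity
  have hpt : ∀ x : Fin d → ℝ, ρ (x, t₀) * (matAccel u x t₀ ⬝ᵥ u (x, t₀))
      = fderiv ℝ f (x, t₀) (0, 1) + ∑ i, fderiv ℝ g x (Pi.single i 1) i := by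
    intro x
    have hφd : DifferentiableAt ℝ (fun y => f (y, t₀)) x :=
      (hfd (x, t₀)).fun_comp' x ((differentiable_fun_id.prodMk (differentiable_const t₀)) x)
    have hψd : ∀ i, DifferentiableAt ℝ (fun y => u (y, t₀) i) x := fun i =>
      DifferentiableAt.fun_comp' (g := fun q => u q i) (f := fun y => (y, t₀)) x (((hui i).differentiable one_ne_zero) (x, t₀))
        ((differentiable_fun_id.prodMk (differentiable_const t₀)) x)
    have hgx : ∀ i, fderiv ℝ g x (Pi.single i 1) i
        = f (x, t₀) * fderiv ℝ (fun y => u (y, t₀) i) x (Pi.single i 1)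
          + u (x, t₀) i * fderiv ℝ (fun y => f (y, t₀)) x (Pi.single i 1) := by
      intro i
      rw [hgdef]
      rw [fderiv_pi (fun i => hφd.fun_mul (hψd i))]
      simp only [ContinuousLinearMap.pi_apply]
      rw [fderiv_fun_mul hφd (hψd i)]
      simp
    have huscomp : ∀ (v : Fin d → ℝ) (i : Fin d),
        fderiv ℝ (fun y => u (y, t₀) i) x v = fderiv ℝ u (x, t₀) (v, 0) i := by
      intro v i
      have h0 : HasFDerivAt (fun y => u (y, t₀))
          ((fderiv ℝ u (x, t₀)).comp ((ContinuousLinearMap.id ℝ (Fin d → ℝ)).prod 0)) x := by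
        exact (hud (x, t₀)).hasFDerivAt.comp x (hemb t₀ x)
      have h1 := hasFDerivAt_pi'.mp h0 i
      rw [h1.fderiv]
      simp
    -- express matAccel
    have hacc : matAccel u x t₀
        = fderiv ℝ u (x, t₀) (0, 1) + fderiv ℝ u (x, t₀) (u (x, t₀), 0) := by
      rw [matAccel, (hut x t₀).deriv, hus x t₀ (u (x, t₀))]
    -- mass balance in explicit form
    have hm := hmass x t₀ ht₀
    rw [matDeriv, (hρt x t₀).deriv, hρs x t₀ (u (x, t₀)), sdiv] at hm
    have hsd : ∀ i : Fin d, fderiv ℝ (fun y => u (y, t₀)) x (Pi.single i 1) i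
        = fderiv ℝ u (x, t₀) (Pi.single i 1, 0) i := fun i => by rw [hus]
    simp only [hsd] at hm
    -- sum of directional derivatives of f equals derivative at (u,0)
    have hvec : ((u (x, t₀), 0) : (Fin d → ℝ) × ℝ)
        = ∑ i, u (x, t₀) i • (((Pi.single i 1 : Fin d → ℝ), (0 : ℝ)) : (Fin d → ℝ) × ℝ) := by
      refine Prod.ext_iff.mpr ⟨?_, ?_⟩
      · rw [Prod.fst_sum]
        funext j
        simp [Finset.sum_apply, Pi.single_apply, Finset.sum_ite_eq]
      · rw [Prod.snd_sum]
        simp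
    have hsum : ∑ i, u (x, t₀) i * fderiv ℝ f (x, t₀) (Pi.single i 1, 0)
        = fderiv ℝ f (x, t₀) (u (x, t₀), 0) := by
      rw [hvec, map_sum]
      refine Finset.sum_congr rfl fun i _ => ?_
      rw [ContinuousLinearMap.map_smul]
      rfl
    -- put everything together
    have hgsum : ∑ i, fderiv ℝ g x (Pi.single i 1) i
        = f (x, t₀) * ∑ i, fderiv ℝ u (x, t₀) (Pi.single i 1, 0) i
          + fderiv ℝ f (x, t₀) (u (x, t₀), 0) := by
      calc ∑ i, fderiv ℝ g x (Pi.single i 1) i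
          = ∑ i, (f (x, t₀) * fderiv ℝ u (x, t₀) (Pi.single i 1, 0) i
              + u (x, t₀) i * fderiv ℝ f (x, t₀) (Pi.single i 1, 0)) :=
            Finset.sum_congr rfl fun i _ => by
              rw [hgx i, huscomp (Pi.single i 1) i, hfs x t₀ (Pi.single i 1)]
        _ = _ := by rw [Finset.sum_add_distrib, ← Finset.mul_sum, hsum]
    rw [hgsum, hacc, key (x, t₀) (0, 1), key (x, t₀) ((u (x, t₀)), 0), add_dotProduct]
    have hfval : f (x, t₀) = 1 / 2 * ρ (x, t₀) * (u (x, t₀) ⬝ᵥ u (x, t₀)) := rfl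
    rw [hfval]
    set r := ρ (x, t₀)
    set nn := u (x, t₀) ⬝ᵥ u (x, t₀)
    set A01 := fderiv ℝ ρ (x, t₀) (0, 1)
    set Av0 := fderiv ℝ ρ (x, t₀) (u (x, t₀), 0)
    set D1 := fderiv ℝ u (x, t₀) (0, 1) ⬝ᵥ u (x, t₀)
    set D2 := fderiv ℝ u (x, t₀) (u (x, t₀), 0) ⬝ᵥ u (x, t₀)
    set Δ := ∑ i, fderiv ℝ u (x, t₀) (Pi.single i 1, 0) i
    linear_combination (-(nn / 2)) * hm
  -- conclude
  have hdivint : Integrable (fun x => ∑ i, fderiv ℝ g x (Pi.single i 1) i) volume := by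
    apply Continuous.integrable_of_hasCompactSupport
    · exact continuous_finset_sum _ fun i _ =>
        (continuous_apply i).comp ((hgC.continuous_fderiv one_ne_zero).clm_apply continuous_const)
    · apply HasCompactSupport.intro hK
      intro x hx
      have hev : g =ᶠ[nhds x] (fun _ => (0 : Fin d → ℝ)) :=
        Filter.eventuallyEq_of_mem (hK.isClosed.isOpen_compl.mem_nhds hx) hg0
      rw [hev.fderiv_eq, fderiv_fun_const]
      simp
  have hintEq : (∫ x, ρ (x, t₀) * (matAccel u x t₀ ⬝ᵥ u (x, t₀)))
      = ∫ x, fderiv ℝ f (x, t₀) (0, 1) := by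
    calc (∫ x, ρ (x, t₀) * (matAccel u x t₀ ⬝ᵥ u (x, t₀)))
        = ∫ x, (fderiv ℝ f (x, t₀) (0, 1) + ∑ i, fderiv ℝ g x (Pi.single i 1) i) := by
          exact integral_congr_ae (Filter.Eventually.of_forall fun x => hpt x)
      _ = (∫ x, fderiv ℝ f (x, t₀) (0, 1)) + ∫ x, ∑ i, fderiv ℝ g x (Pi.single i 1) i :=
          integral_add hF'int hdivint
      _ = ∫ x, fderiv ℝ f (x, t₀) (0, 1) := by rw [hdiv0, add_zero]
  rw [hintEq]
  exact hder
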